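/- Let U_{ij} = b_{ij} e_i e_j^* for i > j and U_{ii} = (b_{ii}/√2) e_i e_i^*, with b_{ij} = b_{ji} ≥ 0 and σ_*^2 := max_{i,j} b_{ij}^2. For any n×n matrices M_1, M_2, M_3, M_4 with nonnegative entries, ∑_{i≥j, k≥l} ∑_{ε,δ ∈ {1,*}} tr(U_{ij}^ε M_1 U_{kl}^δ M_2 U_{ij}^{!ε} M_3 U_{kl}^{!δ} M_4) ≤ σ_*^4 tr(M_3 M_2 M_1 M_4), where !1 := * and !* := 1, tr denotes the normalized trace, and equality holds when b_{ij} = 1 for all i,j. -/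

import Mathlib

open Matrix Finset
open scoped ComplexOrder

/-- `A ^ε` for `ε ∈ {1, *}`: `adjPow A true = A`, `adjPow A false = Aᴴ`. -/
noncomputable def adjPow {n : ℕ} (A : Matrix (Fin n) (Fin n) ℂ) (e : Bool) :
    Matrix (Fin n) (Fin n) ℂ :=
  if e then A else Aᴴ

lemma sandwich {n : ℕ} (a b c d : Fin n) (M : Matrix (Fin n) (Fin n) ℂ) :
    Matrix.single a b (1:ℂ) * M * Matrix.single c d 1 = (M b c) • Matrix.single a d 1 := by
  ext x y
  simp [Matrix.mul_apply, Matrix.single, ite_and, Finset.sum_ite_eq, Finset.mul_sum]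
  aesop

lemma trES {n : ℕ} (a d : Fin n) (M : Matrix (Fin n) (Fin n) ℂ) :
    Matrix.trace (Matrix.single a d (1:ℂ) * M) = M d a := by
  simp [Matrix.trace, Matrix.mul_apply, Matrix.single, Matrix.diag, ite_and, Finset.sum_ite_eq]

lemma ctE {n : ℕ} (a b : Fin n) (r : ℝ) :
    (((r:ℂ)) • Matrix.single a b (1:ℂ))ᴴ = ((r:ℂ)) • Matrix.single b a 1 := by
  ext x y
  simp [Matrix.single, conjTranspose_apply]
  aesop

lemma tr8 {n : ℕ} (x y : ℂ) (a b c d a' b' c' d' : Fin n)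
    (M₁ M₂ M₃ M₄ : Matrix (Fin n) (Fin n) ℂ) :
    Matrix.trace ((x • Matrix.single a b 1) * M₁ * (y • Matrix.single c d 1) * M₂ *
        (x • Matrix.single a' b' 1) * M₃ * (y • Matrix.single c' d' 1) * M₄)
      = x^2 * y^2 * (M₁ b c * M₂ d a' * M₃ b' c' * M₄ d' a) := by
  simp only [smul_mul_assoc, mul_smul_comm, Matrix.trace_smul, smul_eq_mul, sandwich, trES]
  ring

lemma reindex {n : ℕ} (B C : Fin n → Fin n → ℂ) (hsym : ∀ i j, B i j = B j i)
    (hoff : ∀ i j : Fin n, j < i → C i j = B i j) (hdiag : ∀ i, C i i + C i i = B i i)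
    (f : Fin n → Fin n → ℂ) :
    ∑ i : Fin n, ∑ j ∈ Finset.univ.filter (· ≤ i), C i j * (f i j + f j i)
      = ∑ p : Fin n, ∑ s : Fin n, B p s * f p s := by
  have h1 : ∀ i : Fin n, ∑ j ∈ Finset.univ.filter (· ≤ i), C i j * (f i j + f j i)
      = ∑ j : Fin n, ((if j ≤ i then C i j * f i j else 0) + (if j ≤ i then C i j * f j i else 0)) := by
    intro i
    rw [Finset.sum_filter]
    refine Finset.sum_congr rfl fun j _ => ?_
    by_cases h : j ≤ i <;> simp [h, mul_add]
  simp_rw [h1, Finset.sum_add_distrib]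
  rw [Finset.sum_comm (s := Finset.univ) (t := Finset.univ)
      (f := fun i j => if j ≤ i then C i j * f j i else 0)]
  rw [← Finset.sum_add_distrib]
  refine Finset.sum_congr rfl fun p _ => ?_
  rw [← Finset.sum_add_distrib]
  refine Finset.sum_congr rfl fun s _ => ?_
  rcases lt_trichotomy s p with h|h|h
  · rw [if_pos h.le, if_neg (not_le.2 h), hoff _ _ h, add_zero]
  · subst h; rw [if_pos le_rfl, ← add_mul, hdiag]
  · rw [if_neg (not_le.2 h), if_pos h.le, hoff _ _ h, hsym, zero_add]

/-- the entrywise product appearing after expanding all traces -/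
def Wdef {n : ℕ} (M₁ M₂ M₃ M₄ : Matrix (Fin n) (Fin n) ℂ) (p s q t : Fin n) : ℂ :=
  M₁ p q * M₂ t p * M₃ s t * M₄ q s

/-- Crossing inequality for Hermitian matrices with independent complex Gaussian entries:
for `U_{ij} = b_{ij} e_i e_j^*` (`i > j`), `U_{ii} = (b_{ii}/√2) e_i e_i^*` and any
matrices `M₁,…,M₄` with nonnegative entries,
`∑_{i≥j,k≥l} ∑_{ε,δ} tr (U_{ij}^ε M₁ U_{kl}^δ M₂ U_{ij}^{!ε} M₃ U_{kl}^{!δ} M₄)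
  ≤ σ_*^4 tr (M₃ M₂ M₁ M₄)`, with equality when all `b_{ij} = 1`. -/
theorem crossing_inequality_hermitian
    (n : ℕ) (hn : 1 ≤ n) (b : Fin n → Fin n → ℝ)
    (hb_nonneg : ∀ i j, 0 ≤ b i j) (hb_symm : ∀ i j, b i j = b j i)
    (σs : ℝ) (hσ1 : ∀ i j, b i j ≤ σs) (hσ2 : ∃ i j, b i j = σs)
    (U : Fin n → Fin n → Matrix (Fin n) (Fin n) ℂ)
    (hU : ∀ i j : Fin n, j < i → U i j = ((b i j : ℝ) : ℂ) • Matrix.single i j 1)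
    (hUd : ∀ i : Fin n, U i i = ((b i i / Real.sqrt 2 : ℝ) : ℂ) • Matrix.single i i 1)
    (M₁ M₂ M₃ M₄ : Matrix (Fin n) (Fin n) ℂ)
    (hM₁ : ∀ r s, 0 ≤ M₁ r s) (hM₂ : ∀ r s, 0 ≤ M₂ r s)
    (hM₃ : ∀ r s, 0 ≤ M₃ r s) (hM₄ : ∀ r s, 0 ≤ M₄ r s) :
    ((∑ i : Fin n, ∑ j ∈ Finset.univ.filter (· ≤ i),
        ∑ k : Fin n, ∑ l ∈ Finset.univ.filter (· ≤ k),
        ∑ e : Bool, ∑ d : Bool,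
          Matrix.trace (adjPow (U i j) e * M₁ * adjPow (U k l) d * M₂ *
            adjPow (U i j) (!e) * M₃ * adjPow (U k l) (!d) * M₄)) / (n : ℂ)
      ≤ ((σs : ℂ)) ^ 4 * (Matrix.trace (M₃ * M₂ * M₁ * M₄) / (n : ℂ)))
    ∧ ((∀ i j, b i j = 1) →
      (∑ i : Fin n, ∑ j ∈ Finset.univ.filter (· ≤ i),
        ∑ k : Fin n, ∑ l ∈ Finset.univ.filter (· ≤ k),
        ∑ e : Bool, ∑ d : Bool,
          Matrix.trace (adjPow (U i j) e * M₁ * adjPow (U k l) d * M₂ *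
            adjPow (U i j) (!e) * M₃ * adjPow (U k l) (!d) * M₄)) / (n : ℂ)
      = ((σs : ℂ)) ^ 4 * (Matrix.trace (M₃ * M₂ * M₁ * M₄) / (n : ℂ))) := by
  classical
  set W : Fin n → Fin n → Fin n → Fin n → ℂ := Wdef M₁ M₂ M₃ M₄ with hWdef
  set c : Fin n → Fin n → ℝ := fun i j => if i = j then b i i / Real.sqrt 2 else b i j with hc
  set Cc : Fin n → Fin n → ℂ := fun i j => ((c i j : ℝ) : ℂ)^2 with hCc
  set Bb : Fin n → Fin n → ℂ := fun p s => ((b p s : ℝ) : ℂ)^2 with hBb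
  have hUc : ∀ i j : Fin n, j ≤ i → U i j = ((c i j : ℝ) : ℂ) • Matrix.single i j 1 := by
    intro i j hij
    rcases eq_or_lt_of_le hij with h | h
    · subst h; rw [hUd]; simp [hc]
    · rw [hU i j h]; simp [hc, (ne_of_gt h : i ≠ j)]
  have hBsym : ∀ i j, Bb i j = Bb j i := by intro i j; simp [hBb, hb_symm i j]
  have hCoff : ∀ i j : Fin n, j < i → Cc i j = Bb i j := by
    intro i j h
    simp [hCc, hBb, hc, (ne_of_gt h : i ≠ j)]
  have hCdiag : ∀ i, Cc i i + Cc i i = Bb i i := by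
    intro i
    have h2 : (b i i / Real.sqrt 2)^2 + (b i i / Real.sqrt 2)^2 = (b i i)^2 := by
      rw [div_pow, Real.sq_sqrt (by norm_num : (0:ℝ) ≤ 2)]; ring
    simp only [hCc, hBb, hc, if_pos rfl]
    exact_mod_cast h2
  have hterm : ∀ i j : Fin n, j ≤ i → ∀ k l : Fin n, l ≤ k →
      (∑ e : Bool, ∑ d : Bool,
        Matrix.trace (adjPow (U i j) e * M₁ * adjPow (U k l) d * M₂ *
          adjPow (U i j) (!e) * M₃ * adjPow (U k l) (!d) * M₄))
      = Cc i j * (Cc k l * ((W j i k l + W i j k l) + (W j i l k + W i j l k))) := by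
    intro i j hij k l hkl
    rw [hUc i j hij, hUc k l hkl]
    simp only [Fintype.sum_bool, Bool.not_true, Bool.not_false, adjPow, if_true, if_false,
      Bool.false_eq_true, ite_true, ite_false, ctE, tr8, hWdef, Wdef, hCc]
    ring
  set G : Fin n → Fin n → ℂ := fun p s => ∑ q : Fin n, ∑ t : Fin n, Bb q t * W p s q t with hG
  have hstep : ∀ i j : Fin n, j ≤ i →
      (∑ k : Fin n, ∑ l ∈ Finset.univ.filter (· ≤ k), ∑ e : Bool, ∑ d : Bool,
        Matrix.trace (adjPow (U i j) e * M₁ * adjPow (U k l) d * M₂ *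
          adjPow (U i j) (!e) * M₃ * adjPow (U k l) (!d) * M₄))
      = Cc i j * (G j i + G i j) := by
    intro i j hij
    have e1 : (∑ k : Fin n, ∑ l ∈ Finset.univ.filter (· ≤ k), ∑ e : Bool, ∑ d : Bool,
        Matrix.trace (adjPow (U i j) e * M₁ * adjPow (U k l) d * M₂ *
          adjPow (U i j) (!e) * M₃ * adjPow (U k l) (!d) * M₄))
        = ∑ k : Fin n, ∑ l ∈ Finset.univ.filter (· ≤ k),
            Cc i j * (Cc k l * ((W j i k l + W i j k l) + (W j i l k + W i j l k))) :=
      Finset.sum_congr rfl fun k _ => Finset.sum_congr rfl fun l hl =>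
        hterm i j hij k l (by simpa using (Finset.mem_filter.1 hl).2)
    rw [e1]
    simp_rw [← Finset.mul_sum]
    congr 1
    have h2 := reindex Bb Cc hBsym hCoff hCdiag (fun q t => W j i q t + W i j q t)
    rw [h2]
    simp only [hG]
    simp_rw [mul_add, Finset.sum_add_distrib]
  have hmain : (∑ i : Fin n, ∑ j ∈ Finset.univ.filter (· ≤ i),
        ∑ k : Fin n, ∑ l ∈ Finset.univ.filter (· ≤ k),
        ∑ e : Bool, ∑ d : Bool,
          Matrix.trace (adjPow (U i j) e * M₁ * adjPow (U k l) d * M₂ *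
            adjPow (U i j) (!e) * M₃ * adjPow (U k l) (!d) * M₄))
      = ∑ p : Fin n, ∑ s : Fin n, Bb p s * G p s := by
    calc (∑ i : Fin n, ∑ j ∈ Finset.univ.filter (· ≤ i),
        ∑ k : Fin n, ∑ l ∈ Finset.univ.filter (· ≤ k),
        ∑ e : Bool, ∑ d : Bool,
          Matrix.trace (adjPow (U i j) e * M₁ * adjPow (U k l) d * M₂ *
            adjPow (U i j) (!e) * M₃ * adjPow (U k l) (!d) * M₄))
        = ∑ i : Fin n, ∑ j ∈ Finset.univ.filter (· ≤ i), Cc i j * (G j i + G i j) :=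
          Finset.sum_congr rfl fun i _ => Finset.sum_congr rfl fun j hj =>
            hstep i j (by simpa using (Finset.mem_filter.1 hj).2)
      _ = ∑ p : Fin n, ∑ s : Fin n, Bb p s * G s p :=
          reindex Bb Cc hBsym hCoff hCdiag (fun p s => G s p)
      _ = ∑ p : Fin n, ∑ s : Fin n, Bb p s * G p s := by
          rw [Finset.sum_comm]
          exact Finset.sum_congr rfl fun p _ => Finset.sum_congr rfl fun s _ => by
            rw [hBsym s p]
  have htrace : Matrix.trace (M₃ * M₂ * M₁ * M₄)
      = ∑ p : Fin n, ∑ s : Fin n, ∑ q : Fin n, ∑ t : Fin n, W p s q t := by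
    have h1 : Matrix.trace (M₃ * M₂ * M₁ * M₄)
        = ∑ s : Fin n, ∑ q : Fin n, ∑ p : Fin n, ∑ t : Fin n, W p s q t := by
      simp only [Matrix.trace, Matrix.diag, Matrix.mul_apply, Finset.sum_mul]
      exact Finset.sum_congr rfl fun s _ => Finset.sum_congr rfl fun q _ =>
        Finset.sum_congr rfl fun p _ => Finset.sum_congr rfl fun t _ => by
          simp only [hWdef, Wdef]; ring
    rw [h1]
    calc (∑ s : Fin n, ∑ q : Fin n, ∑ p : Fin n, ∑ t : Fin n, W p s q t)
        = ∑ s : Fin n, ∑ p : Fin n, ∑ q : Fin n, ∑ t : Fin n, W p s q t :=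
          Finset.sum_congr rfl fun s _ => Finset.sum_comm
      _ = ∑ p : Fin n, ∑ s : Fin n, ∑ q : Fin n, ∑ t : Fin n, W p s q t := Finset.sum_comm
  have hW0 : ∀ p s q t : Fin n, 0 ≤ W p s q t := fun p s q t =>
    mul_nonneg (mul_nonneg (mul_nonneg (hM₁ p q) (hM₂ t p)) (hM₃ s t)) (hM₄ q s)
  have hB0 : ∀ p s : Fin n, 0 ≤ Bb p s := by
    intro p s
    simp only [hBb]
    calc (0:ℂ) = (((0:ℝ)) : ℂ) := by norm_num
      _ ≤ (((b p s)^2 : ℝ) : ℂ) := by exact_mod_cast sq_nonneg (b p s)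
      _ = ((b p s : ℝ) : ℂ)^2 := by push_cast; ring
  have hBσ : ∀ p s : Fin n, Bb p s ≤ ((σs : ℂ))^2 := by
    intro p s
    have hr : (b p s)^2 ≤ σs^2 := pow_le_pow_left₀ (hb_nonneg p s) (hσ1 p s) 2
    simp only [hBb]
    calc ((b p s : ℝ) : ℂ)^2 = (((b p s)^2 : ℝ) : ℂ) := by push_cast; ring
      _ ≤ ((σs^2 : ℝ) : ℂ) := by exact_mod_cast hr
      _ = ((σs : ℂ))^2 := by push_cast; ring
  have hσ0 : (0:ℝ) ≤ σs := le_trans (hb_nonneg ⟨0, hn⟩ ⟨0, hn⟩) (hσ1 _ _)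
  have hσ2c : (0:ℂ) ≤ ((σs : ℂ))^2 := by
    calc (0:ℂ) = (((0:ℝ)) : ℂ) := by norm_num
      _ ≤ ((σs^2 : ℝ) : ℂ) := by exact_mod_cast sq_nonneg σs
      _ = ((σs : ℂ))^2 := by push_cast; ring
  have hinv : (0:ℂ) ≤ ((n:ℂ))⁻¹ := by
    have h : ((n:ℂ))⁻¹ = (((n:ℝ)⁻¹ : ℝ) : ℂ) := by push_cast; ring
    rw [h]
    exact_mod_cast inv_nonneg.2 (Nat.cast_nonneg n)
  have hineq : (∑ i : Fin n, ∑ j ∈ Finset.univ.filter (· ≤ i),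
        ∑ k : Fin n, ∑ l ∈ Finset.univ.filter (· ≤ k),
        ∑ e : Bool, ∑ d : Bool,
          Matrix.trace (adjPow (U i j) e * M₁ * adjPow (U k l) d * M₂ *
            adjPow (U i j) (!e) * M₃ * adjPow (U k l) (!d) * M₄))
      ≤ ((σs : ℂ))^4 * Matrix.trace (M₃ * M₂ * M₁ * M₄) := by
    rw [hmain, htrace]
    simp only [hG]
    simp_rw [Finset.mul_sum]
    refine Finset.sum_le_sum fun p _ => Finset.sum_le_sum fun s _ =>
      Finset.sum_le_sum fun q _ => Finset.sum_le_sum fun t _ => ?_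
    have h4 : ((σs : ℂ))^4 = ((σs : ℂ))^2 * ((σs : ℂ))^2 := by ring
    rw [h4, mul_assoc]
    exact mul_le_mul (hBσ p s)
      (mul_le_mul_of_nonneg_right (hBσ q t) (hW0 p s q t))
      (mul_nonneg (hB0 q t) (hW0 p s q t)) hσ2c
  constructor
  · rw [← mul_div_assoc, div_eq_mul_inv, div_eq_mul_inv]
    exact mul_le_mul_of_nonneg_right hineq hinv
  · intro hb1
    have hσone : σs = 1 := by obtain ⟨i, j, hij⟩ := hσ2; rw [← hij, hb1]
    have heq : (∑ i : Fin n, ∑ j ∈ Finset.univ.filter (· ≤ i),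
        ∑ k : Fin n, ∑ l ∈ Finset.univ.filter (· ≤ k),
        ∑ e : Bool, ∑ d : Bool,
          Matrix.trace (adjPow (U i j) e * M₁ * adjPow (U k l) d * M₂ *
            adjPow (U i j) (!e) * M₃ * adjPow (U k l) (!d) * M₄))
        = ((σs : ℂ))^4 * Matrix.trace (M₃ * M₂ * M₁ * M₄) := by
      rw [hmain, htrace, hσone]
      simp only [hG, hBb, hb1]
      norm_num
    rw [heq, mul_div_assoc]
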